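/- For every α > 0, the Rényi entropy function h_α is β-Hölder continuous on [0,1] with β = min(α, 1/2). -/

import Mathlib

open scoped NNReal ENNReal
open Real Set

/-- The α-Rényi entropy function on [0,1]. -/
noncomputable def renyiEntropy (α : ℝ) (x : ℝ) : ℝ :=
  if x = 0 ∨ x = 1 then 0
  else if α = 1 then -x * Real.log x - (1 - x) * Real.log (1 - x)
  else (1 - α)⁻¹ * Real.log (x ^ α + (1 - x) ^ α)

private lemma rpow_sub_le_aux {a b β : ℝ} (hb : 0 ≤ b) (hba : b ≤ a)
    (hβ0 : 0 ≤ β) (hβ1 : β ≤ 1) : a ^ β - b ^ β ≤ (a - b) ^ β := by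
  have ha : 0 ≤ a := hb.trans hba
  have hab : 0 ≤ a - b := by linarith
  have key := NNReal.rpow_add_le_add_rpow (a - b).toNNReal b.toNNReal hβ0 hβ1
  have h1 : (a - b).toNNReal + b.toNNReal = a.toNNReal := by
    rw [← Real.toNNReal_add hab hb]
    norm_num
  rw [h1] at key
  have h2 := NNReal.coe_le_coe.2 key
  rw [NNReal.coe_rpow, NNReal.coe_add, NNReal.coe_rpow, NNReal.coe_rpow,
    Real.coe_toNNReal _ ha, Real.coe_toNNReal _ hb, Real.coe_toNNReal _ hab] at h2
  linarith

private lemma holder_of_deriv_bound {h h' : ℝ → ℝ} {β M : ℝ}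
    (hβ0 : 0 < β) (hβ1 : β ≤ 1) (hM : 0 ≤ M)
    (hc : ContinuousOn h (Icc 0 1))
    (hd : ∀ s ∈ Ioo (0:ℝ) 1, HasDerivAt h (h' s) s)
    (hb : ∀ s ∈ Ioo (0:ℝ) 1, |h' s| ≤ M * (s ^ (β - 1) + (1 - s) ^ (β - 1))) :
    ∀ x ∈ Icc (0:ℝ) 1, ∀ y ∈ Icc (0:ℝ) 1,
      |h x - h y| ≤ 2 * M / β * |x - y| ^ β := by
  set φ : ℝ → ℝ := fun s => M / β * (s ^ β - (1 - s) ^ β) with hφdef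
  have hφc : Continuous φ := by
    have c1 : Continuous fun s : ℝ => (1 - s) ^ β :=
      (Real.continuous_rpow_const hβ0.le).comp (continuous_const.sub continuous_id)
    exact continuous_const.mul ((Real.continuous_rpow_const hβ0.le).sub c1)
  have hφd : ∀ s ∈ Ioo (0:ℝ) 1,
      HasDerivAt φ (M * (s ^ (β - 1) + (1 - s) ^ (β - 1))) s := by
    intro s hs
    have h1 : HasDerivAt (fun x : ℝ => x ^ β) (β * s ^ (β - 1)) s :=
      Real.hasDerivAt_rpow_const (Or.inl hs.1.ne')
    have h2 : HasDerivAt (fun x : ℝ => (1 - x) ^ β) (β * (1 - s) ^ (β - 1) * (-1)) s :=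
      (Real.hasDerivAt_rpow_const (p := β)
        (Or.inl (by have := hs.2; intro hc0; nlinarith [hs.2] : (1:ℝ) - s ≠ 0))).comp s
        ((hasDerivAt_id s).const_sub 1)
    have h3 := (h1.sub h2).const_mul (M / β)
    refine h3.congr_deriv ?_
    field_simp
    ring
  have key : ∀ g g' : ℝ → ℝ, ContinuousOn g (Icc 0 1) →
      (∀ s ∈ Ioo (0:ℝ) 1, HasDerivAt g (g' s) s) →
      (∀ s ∈ Ioo (0:ℝ) 1, g' s ≤ M * (s ^ (β - 1) + (1 - s) ^ (β - 1))) →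
      MonotoneOn (fun s => φ s - g s) (Icc 0 1) := by
    intro g g' hgc hgd hgb
    apply monotoneOn_of_deriv_nonneg (convex_Icc 0 1)
      (hφc.continuousOn.sub hgc)
    · intro s hs
      rw [interior_Icc] at hs
      exact ((hφd s hs).sub (hgd s hs)).differentiableAt.differentiableWithinAt
    · intro s hs
      rw [interior_Icc] at hs
      rw [((hφd s hs).sub (hgd s hs)).deriv]
      have := hgb s hs
      linarith
  have mono1 : MonotoneOn (fun s => φ s - h s) (Icc 0 1) :=
    key h h' hc hd fun s hs => (le_abs_self _).trans (hb s hs)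
  have mono2 : MonotoneOn (fun s => φ s - (-h s)) (Icc 0 1) :=
    key (fun s => -h s) (fun s => -(h' s)) hc.neg (fun s hs => (hd s hs).neg)
      fun s hs => (neg_le_abs _).trans (hb s hs)
  have main : ∀ x ∈ Icc (0:ℝ) 1, ∀ y ∈ Icc (0:ℝ) 1, x ≤ y →
      |h x - h y| ≤ 2 * M / β * |x - y| ^ β := by
    intro x hx y hy hxy
    have e1 := mono1 hx hy hxy
    have e2 := mono2 hx hy hxy
    simp only at e1 e2
    have hφxy : φ y - φ x ≤ 2 * M / β * (y - x) ^ β := by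
      have b1 : y ^ β - x ^ β ≤ (y - x) ^ β := rpow_sub_le_aux hx.1 hxy hβ0.le hβ1
      have b2 : (1 - x) ^ β - (1 - y) ^ β ≤ (y - x) ^ β := by
        have := rpow_sub_le_aux (a := 1 - x) (b := 1 - y)
          (by linarith [hy.2]) (by linarith) hβ0.le hβ1
        simpa using this
      have hMβ : 0 ≤ M / β := div_nonneg hM hβ0.le
      have : φ y - φ x = M / β * ((y ^ β - x ^ β) + ((1 - x) ^ β - (1 - y) ^ β)) := by
        rw [hφdef]; ring
      rw [this]
      calc M / β * ((y ^ β - x ^ β) + ((1 - x) ^ β - (1 - y) ^ β))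
          ≤ M / β * ((y - x) ^ β + (y - x) ^ β) := by
            apply mul_le_mul_of_nonneg_left (by linarith) hMβ
        _ = 2 * M / β * (y - x) ^ β := by ring
    have habs : |x - y| = y - x := by rw [abs_sub_comm]; exact abs_of_nonneg (by linarith)
    rw [habs]
    rw [abs_sub_le_iff]
    constructor <;> linarith
  intro x hx y hy
  rcases le_total x y with hxy | hxy
  · exact main x hx y hy hxy
  · rw [abs_sub_comm, abs_sub_comm x y]
    exact main y hy x hx hxy

private lemma neg_log_le_rpow {s : ℝ} (hs : 0 < s) :
    -Real.log s ≤ 2 * s ^ (-(1/2) : ℝ) := by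
  have h1 : Real.log (s ^ (-(1/2) : ℝ)) ≤ s ^ (-(1/2) : ℝ) - 1 :=
    Real.log_le_sub_one_of_pos (Real.rpow_pos_of_pos hs _)
  rw [Real.log_rpow hs] at h1
  have h2 : (0:ℝ) < s ^ (-(1/2) : ℝ) := Real.rpow_pos_of_pos hs _
  linarith

/-- For every `α > 0`, the Rényi entropy function `h_α` is `β`-Hölder continuous on
`[0,1]` with `β = min (α, 1/2)`. -/
theorem renyiEntropy_holder (α : ℝ) (hα : 0 < α) :
    ∃ C : ℝ≥0, HolderOnWith C (Real.toNNReal (min α (1 / 2)))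
      (renyiEntropy α) (Set.Icc (0 : ℝ) 1) := by
  set β : ℝ := min α (1/2) with hβdef
  have hβ0 : 0 < β := lt_min hα (by norm_num)
  have hβh : β ≤ 1/2 := min_le_right _ _
  have hβ1 : β ≤ 1 := hβh.trans (by norm_num)
  have hβα : β ≤ α := min_le_left _ _
  -- main quantitative bound
  have key : ∃ M : ℝ, 0 ≤ M ∧ ∀ x ∈ Icc (0:ℝ) 1, ∀ y ∈ Icc (0:ℝ) 1,
      |renyiEntropy α x - renyiEntropy α y| ≤ M * |x - y| ^ β := by
    by_cases hα1 : α = 1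
    · -- Shannon case
      subst hα1
      have hβeq : β = 1/2 := min_eq_right (by norm_num)
      set g : ℝ → ℝ := fun x => -(x * Real.log x) - (1 - x) * Real.log (1 - x) with hgdef
      have heq : ∀ x ∈ Icc (0:ℝ) 1, renyiEntropy 1 x = g x := by
        intro x hx
        unfold renyiEntropy
        rcases eq_or_ne x 0 with rfl | hx0
        · simp [hgdef]
        rcases eq_or_ne x 1 with rfl | hx1
        · simp [hgdef]
        rw [if_neg (by tauto), if_pos rfl, hgdef]
        ring
      have hgc : ContinuousOn g (Icc 0 1) := by
        have : Continuous g :=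
          (Real.continuous_mul_log.neg).sub
            (Real.continuous_mul_log.comp (continuous_const.sub continuous_id))
        exact this.continuousOn
      have hgd : ∀ s ∈ Ioo (0:ℝ) 1,
          HasDerivAt g (Real.log (1 - s) - Real.log s) s := by
        intro s hs
        have h1 : HasDerivAt (fun x : ℝ => x * Real.log x) (Real.log s + 1) s :=
          Real.hasDerivAt_mul_log hs.1.ne'
        have h2 : HasDerivAt (fun x : ℝ => (1 - x) * Real.log (1 - x))
            ((Real.log (1 - s) + 1) * (-1)) s :=
          (Real.hasDerivAt_mul_log (by have := hs.2; intro hc0; nlinarith : (1:ℝ) - s ≠ 0)).comp s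
            ((hasDerivAt_id s).const_sub 1)
        have := (h1.neg).sub h2
        refine this.congr_deriv ?_
        ring
      have hgb : ∀ s ∈ Ioo (0:ℝ) 1,
          |Real.log (1 - s) - Real.log s| ≤ 2 * (s ^ (β - 1) + (1 - s) ^ (β - 1)) := by
        intro s hs
        have hs1 : (0:ℝ) < 1 - s := by linarith [hs.2]
        have l1 : -Real.log s ≤ 2 * s ^ (-(1/2) : ℝ) := neg_log_le_rpow hs.1
        have l2 : -Real.log (1 - s) ≤ 2 * (1 - s) ^ (-(1/2) : ℝ) := neg_log_le_rpow hs1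
        have hlogs : Real.log s ≤ 0 := Real.log_nonpos hs.1.le (by linarith [hs.2])
        have hlog1s : Real.log (1 - s) ≤ 0 := Real.log_nonpos hs1.le (by linarith [hs.1])
        have hβe : β - 1 = -(1/2) := by rw [hβeq]; norm_num
        rw [hβe]
        have p1 : (0:ℝ) < s ^ (-(1/2) : ℝ) := Real.rpow_pos_of_pos hs.1 _
        have p2 : (0:ℝ) < (1 - s) ^ (-(1/2) : ℝ) := Real.rpow_pos_of_pos hs1 _
        rw [abs_le]
        constructor <;> nlinarith
      have := holder_of_deriv_bound hβ0 hβ1 (by norm_num : (0:ℝ) ≤ 2) hgc hgd hgb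
      refine ⟨2 * 2 / β, by positivity, ?_⟩
      intro x hx y hy
      rw [heq x hx, heq y hy]
      exact this x hx y hy
    · -- α ≠ 1
      set g : ℝ → ℝ := fun x => (1 - α)⁻¹ * Real.log (x ^ α + (1 - x) ^ α) with hgdef
      have hDlb : ∀ s ∈ Icc (0:ℝ) 1, (1/2 : ℝ) ^ α ≤ s ^ α + (1 - s) ^ α := by
        intro s hs
        rcases le_total s (1/2) with h | h
        · have : (1/2 : ℝ) ^ α ≤ (1 - s) ^ α :=
            Real.rpow_le_rpow (by norm_num) (by linarith) hα.le
          have := Real.rpow_nonneg hs.1 α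
          linarith
        · have : (1/2 : ℝ) ^ α ≤ s ^ α := Real.rpow_le_rpow (by norm_num) h hα.le
          have := Real.rpow_nonneg (by linarith [hs.2] : (0:ℝ) ≤ 1 - s) α
          linarith
      have hDpos : ∀ s ∈ Icc (0:ℝ) 1, (0:ℝ) < s ^ α + (1 - s) ^ α := fun s hs =>
        lt_of_lt_of_le (Real.rpow_pos_of_pos (by norm_num) α) (hDlb s hs)
      have heq : ∀ x ∈ Icc (0:ℝ) 1, renyiEntropy α x = g x := by
        intro x hx
        unfold renyiEntropy
        rcases eq_or_ne x 0 with rfl | hx0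
        · rw [if_pos (Or.inl rfl), hgdef]
          simp [Real.zero_rpow hα.ne']
        rcases eq_or_ne x 1 with rfl | hx1
        · rw [if_pos (Or.inr rfl), hgdef]
          simp [Real.zero_rpow hα.ne']
        rw [if_neg (by tauto), if_neg hα1]
      have hgc : ContinuousOn g (Icc 0 1) := by
        have hDc : Continuous (fun s : ℝ => s ^ α + (1 - s) ^ α) :=
          (Real.continuous_rpow_const hα.le).add
            ((Real.continuous_rpow_const hα.le).comp (continuous_const.sub continuous_id))
        exact continuousOn_const.mul
          (hDc.continuousOn.log fun s hs => (hDpos s hs).ne')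
      set g' : ℝ → ℝ := fun s =>
        (1 - α)⁻¹ * ((s ^ α + (1 - s) ^ α)⁻¹ *
          (α * s ^ (α - 1) + α * (1 - s) ^ (α - 1) * (-1))) with hg'def
      have hgd : ∀ s ∈ Ioo (0:ℝ) 1, HasDerivAt g (g' s) s := by
        intro s hs
        have hs1 : (0:ℝ) < 1 - s := by linarith [hs.2]
        have h1 : HasDerivAt (fun x : ℝ => x ^ α) (α * s ^ (α - 1)) s :=
          Real.hasDerivAt_rpow_const (Or.inl hs.1.ne')
        have h2 : HasDerivAt (fun x : ℝ => (1 - x) ^ α) (α * (1 - s) ^ (α - 1) * (-1)) s :=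
          (Real.hasDerivAt_rpow_const (p := α) (Or.inl hs1.ne')).comp s
            ((hasDerivAt_id s).const_sub 1)
        have hD := h1.add h2
        have hlog := (Real.hasDerivAt_log (hDpos s (Ioo_subset_Icc_self hs)).ne').comp s hD
        exact hlog.const_mul (1 - α)⁻¹
      set M : ℝ := |1 - α|⁻¹ * ((2:ℝ) ^ α * α) with hMdef
      have hM : 0 ≤ M := by positivity
      have hgb : ∀ s ∈ Ioo (0:ℝ) 1,
          |g' s| ≤ M * (s ^ (β - 1) + (1 - s) ^ (β - 1)) := by
        intro s hs
        have hs1 : (0:ℝ) < 1 - s := by linarith [hs.2]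
        have hsI := Ioo_subset_Icc_self hs
        have hDp := hDpos s hsI
        have hDinv : (s ^ α + (1 - s) ^ α)⁻¹ ≤ (2:ℝ) ^ α := by
          have h1 : (s ^ α + (1 - s) ^ α)⁻¹ ≤ ((1/2 : ℝ) ^ α)⁻¹ :=
            inv_anti₀ (Real.rpow_pos_of_pos (by norm_num) α) (hDlb s hsI)
          have h2 : (2:ℝ) ^ α * (1/2 : ℝ) ^ α = 1 := by
            rw [← Real.mul_rpow (by norm_num) (by norm_num)]
            norm_num
          rw [(eq_inv_of_mul_eq_one_left h2).symm] at h1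
          exact h1
        have hb1 : s ^ (α - 1) ≤ s ^ (β - 1) :=
          Real.rpow_le_rpow_of_exponent_ge hs.1 (by linarith [hs.2]) (by linarith)
        have hb2 : (1 - s) ^ (α - 1) ≤ (1 - s) ^ (β - 1) :=
          Real.rpow_le_rpow_of_exponent_ge hs1 (by linarith [hs.1]) (by linarith)
        have hn1 : (0:ℝ) ≤ s ^ (α - 1) := Real.rpow_nonneg hs.1.le _
        have hn2 : (0:ℝ) ≤ (1 - s) ^ (α - 1) := Real.rpow_nonneg hs1.le _
        have hnum : |α * s ^ (α - 1) + α * (1 - s) ^ (α - 1) * (-1)|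
            ≤ α * (s ^ (β - 1) + (1 - s) ^ (β - 1)) := by
          rw [abs_le]
          constructor <;> nlinarith [Real.rpow_nonneg hs.1.le (β-1), Real.rpow_nonneg hs1.le (β-1)]
        rw [hg'def]
        rw [abs_mul, abs_mul, abs_inv, abs_inv, abs_of_pos hDp]
        calc |1 - α|⁻¹ * ((s ^ α + (1 - s) ^ α)⁻¹ *
              |α * s ^ (α - 1) + α * (1 - s) ^ (α - 1) * (-1)|)
            ≤ |1 - α|⁻¹ * ((2:ℝ) ^ α * (α * (s ^ (β - 1) + (1 - s) ^ (β - 1)))) := by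
              apply mul_le_mul_of_nonneg_left _ (by positivity)
              exact mul_le_mul hDinv hnum (abs_nonneg _) (by positivity)
          _ = M * (s ^ (β - 1) + (1 - s) ^ (β - 1)) := by rw [hMdef]; ring
      have := holder_of_deriv_bound hβ0 hβ1 hM hgc hgd hgb
      refine ⟨2 * M / β, by positivity, ?_⟩
      intro x hx y hy
      rw [heq x hx, heq y hy]
      exact this x hx y hy
  obtain ⟨M, hM, hbound⟩ := key
  refine ⟨M.toNNReal, ?_⟩
  intro x hx y hy
  rw [edist_dist, edist_dist, Real.dist_eq, Real.dist_eq]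
  have hcoe : ((Real.toNNReal β : ℝ≥0) : ℝ) = β := Real.coe_toNNReal β hβ0.le
  rw [hcoe]
  rw [ENNReal.ofReal_rpow_of_nonneg (abs_nonneg _) hβ0.le]
  have h1 : (M.toNNReal : ℝ≥0∞) = ENNReal.ofReal M := rfl
  rw [h1, ← ENNReal.ofReal_mul hM]
  exact ENNReal.ofReal_le_ofReal (hbound x hx y hy)
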